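/- Linearization of trading cost: for any player i, there exist maps f : A_i → ℝ^{2T} and h : A_{-i} → ℝ^{2T} such that ⟨f(a_i), h(a_{-i})⟩ = c(a_i, a_{-i}) for all a_i and a_{-i}. Concretely, with f(a_i)_t = a_i'(t) and f(a_i)_{T+t} = a_i'(t)(a_i'(t) + κ a_i(t−1)), and h(a_{-i})_t = Σ_{j≠i}(a_j'(t) + κ a_j(t−1)) and h(a_{-i})_{T+t} = 1, the inner product equals the trading cost. -/

import Mathlib

/-- Linearization of the trading cost: with the learner vector `f(a_i) ∈ ℝ^{2T}` given by
    `f_t = a_i'(t)`, `f_{T+t} = a_i'(t)(a_i'(t) + κ a_i(t−1))` and adversary vector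
    `h_t = Σ_{j≠i}(a_j'(t) + κ a_j(t−1))`, `h_{T+t} = 1`, the standard inner product
    `⟨f(a_i), h(a_{-i})⟩` equals the trading cost `c(a_i, a_{-i})`. -/
theorem linearized_cost (n T : ℕ) (κ : ℝ) (a : Fin n → ℕ → ℝ) (i : Fin n) :
    (let d : Fin n → ℕ → ℝ := fun j t => a j t - a j (t - 1)
     let f : ℕ → ℝ := fun k =>
       if k ≤ T then d i k
       else d i (k - T) * (d i (k - T) + κ * a i (k - T - 1))
     let h : ℕ → ℝ := fun k =>
       if k ≤ T then ∑ j ∈ Finset.univ.erase i, (d j k + κ * a j (k - 1))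
       else 1
     ∑ k ∈ Finset.Icc 1 (2 * T), f k * h k
       = ∑ t ∈ Finset.Icc 1 T,
           (d i t * (∑ j : Fin n, d j t) + κ * d i t * ∑ j : Fin n, a j (t - 1))) := by
  intro d f h
  have hIcc : ∀ m : ℕ, Finset.Icc 1 m = Finset.Ioc 0 m := by
    intro m; rw [← Finset.Icc_add_one_left_eq_Ioc]; rfl
  rw [hIcc, hIcc, ← Finset.sum_Ioc_consecutive _ (Nat.zero_le T) (by omega : T ≤ 2 * T)]
  have hre : ∑ k ∈ Finset.Ioc T (2 * T), f k * h k
      = ∑ t ∈ Finset.Ioc 0 T, f (t + T) * h (t + T) := by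
    apply Finset.sum_nbij' (fun k => k - T) (fun t => t + T)
    · intro k hk; simp only [Finset.mem_Ioc] at *; omega
    · intro t ht; simp only [Finset.mem_Ioc] at *; omega
    · intro k hk; simp only [Finset.mem_Ioc] at hk; omega
    · intro t ht; simp only [Finset.mem_Ioc] at ht; omega
    · intro k hk; simp only [Finset.mem_Ioc] at hk
      rw [Nat.sub_add_cancel (by omega)]
  rw [hre, ← Finset.sum_add_distrib]
  apply Finset.sum_congr rfl
  intro t ht
  simp only [Finset.mem_Ioc] at ht
  have h1 : f t = d i t := if_pos ht.2
  have h2 : h t = ∑ j ∈ Finset.univ.erase i, (d j t + κ * a j (t - 1)) := if_pos ht.2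
  have h3 : f (t + T) = d i t * (d i t + κ * a i (t - 1)) := by
    have : ¬ (t + T ≤ T) := by omega
    simp only [f, this, if_false, Nat.add_sub_cancel]
  have h4 : h (t + T) = 1 := by
    have : ¬ (t + T ≤ T) := by omega
    simp only [h, this, if_false]
  rw [h1, h2, h3, h4,
    ← Finset.add_sum_erase _ (fun j => d j t) (Finset.mem_univ i),
    ← Finset.add_sum_erase _ (fun j => a j (t - 1)) (Finset.mem_univ i),
    Finset.sum_add_distrib]
  simp only [← Finset.mul_sum]
  ring
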